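/- The diagonal matrix D provides a 'second inverse' for the multiparametric GL R-matrix: for all free indices A,D,E,F (with summation over repeated indices B,C) one has d^A (d^C)⁻¹ (R⁻¹)^{BA}_{DC} R^{EC}_{BF} = δ^A_F δ^E_D, d^A (d^C)⁻¹ R^{AB}_{CD} (R⁻¹)^{CE}_{FB} = δ^A_F δ^E_D, d^B (d^D)⁻¹ (R⁻¹)^{AB}_{CD} R^{CE}_{FB} = δ^A_F δ^E_D, and d^B (d^D)⁻¹ R^{BA}_{DC} (R⁻¹)^{EC}_{BF} = δ^A_F δ^E_D; moreover the normalization conditions Σ_C R^{AC}_{CB} (d^C)⁻¹ = δ^A_B = Σ_C (R⁻¹)^{AC}_{CB} d^C hold. -/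

import Mathlib

open Finset

/-- Kronecker delta with values in `ℂ`. -/
def kd {α : Type*} [DecidableEq α] (a b : α) : ℂ := if a = b then 1 else 0

/-- The multiparametric `GL_{q,r}(N)` R-matrix.  Indices are 0-based: the paper index
`A ∈ {1,…,N}` corresponds to `A.val + 1`.
`R^{AB}_{CD} = δ^A_C δ^B_D (r/q_{AB} + (r−1)δ^{AB}) + (r−r⁻¹) δ^A_D δ^B_C θ^{AB}`,
with `θ^{AB} = 1` iff `A > B`. -/
noncomputable def Rgl (N : ℕ) (r : ℂ) (q : Fin N → Fin N → ℂ)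
    (A B C D : Fin N) : ℂ :=
  kd A C * kd B D * (r / q A B + (r - 1) * kd A B)
    + (r - r⁻¹) * kd A D * kd B C * (if B < A then 1 else 0)

/-- The R-matrix with all deformation parameters inverted: `R_{q⁻¹,r⁻¹}`. -/
noncomputable def RglInv (N : ℕ) (r : ℂ) (q : Fin N → Fin N → ℂ)
    (A B C D : Fin N) : ℂ :=
  Rgl N r⁻¹ (fun a b => (q a b)⁻¹) A B C D

/-- Entries of the diagonal matrix `D`: `d^A = r^{2A−1}` (paper index `A = i + 1` for the
0-based index `i`). -/
noncomputable def dgl (r : ℂ) (i : ℕ) : ℂ := r ^ (2 * i + 1)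

lemma kd_self {α : Type*} [DecidableEq α] (a : α) : kd a a = 1 := if_pos rfl

lemma geom_range (x : ℂ) (n : ℕ) : (x - 1) * ∑ b ∈ Finset.range n, x ^ b = x ^ n - 1 := by
  linear_combination geom_sum_mul x n

lemma inv_sq_ne_one {r : ℂ} (h : r ^ 2 ≠ 1) : r⁻¹ ^ 2 - 1 ≠ 0 := by
  rw [inv_pow, sub_ne_zero]
  intro hh
  exact h (by rw [← inv_inv (r ^ 2), hh, inv_one])

lemma inv_eq_self_of_sq {r : ℂ} (hr : r ≠ 0) (h : r ^ 2 = 1) : r⁻¹ = r := by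
  field_simp
  linear_combination h.symm

lemma pw_gen {r : ℂ} (hr : r ≠ 0) (n t : ℕ) : r ^ n * (r ^ (n + t))⁻¹ = (r⁻¹) ^ t := by
  rw [pow_add, mul_inv, ← mul_assoc, mul_inv_cancel₀ (pow_ne_zero _ hr), one_mul, inv_pow]

lemma pw_gen' {r : ℂ} (hr : r ≠ 0) (n t : ℕ) : r ^ (n + t) * (r ^ n)⁻¹ = r ^ t := by
  rw [pow_add, mul_comm (r ^ n), mul_assoc, mul_inv_cancel₀ (pow_ne_zero _ hr), mul_one]

lemma pw_s {r : ℂ} (hr : r ≠ 0) (a k : ℕ) :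
    r ^ (2 * a + 1) * (r ^ (2 * (a + 1 + k) + 1))⁻¹ = (r⁻¹ ^ 2) ^ (k + 1) := by
  rw [show 2 * (a + 1 + k) + 1 = (2 * a + 1) + 2 * (k + 1) by ring, pw_gen hr, ← pow_mul]

lemma pw_r {r : ℂ} (hr : r ≠ 0) (a k : ℕ) :
    r ^ (2 * (a + 1 + k) + 1) * (r ^ (2 * a + 1))⁻¹ = (r ^ 2) ^ (k + 1) := by
  rw [show 2 * (a + 1 + k) + 1 = (2 * a + 1) + 2 * (k + 1) by ring, pw_gen' hr, pow_mul]

lemma pw_s' {r : ℂ} (hr : r ≠ 0) (a m k : ℕ) (hk : k ≤ m) :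
    r ^ (2 * (a + 1 + k) + 1) * (r ^ (2 * (a + m + 1) + 1))⁻¹ = (r⁻¹ ^ 2) ^ (m - k) := by
  rw [show 2 * (a + m + 1) + 1 = (2 * (a + 1 + k) + 1) + 2 * (m - k) by omega, pw_gen hr,
    ← pow_mul]

lemma pw_r' {r : ℂ} (hr : r ≠ 0) (a m k : ℕ) (hk : k ≤ m) :
    r ^ (2 * (a + m + 1) + 1) * (r ^ (2 * (a + 1 + k) + 1))⁻¹ = (r ^ 2) ^ (m - k) := by
  rw [show 2 * (a + m + 1) + 1 = (2 * (a + 1 + k) + 1) + 2 * (m - k) by omega, pw_gen' hr,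
    pow_mul]

lemma pw0s {r : ℂ} (hr : r ≠ 0) (a : ℕ) : r * (r ^ (2 * a + 1))⁻¹ = (r⁻¹ ^ 2) ^ a := by
  have : r ^ (2 * a + 1) = r ^ (2 * a) * r := pow_succ r (2 * a)
  rw [this, mul_inv, ← mul_comm, mul_assoc, ← mul_comm r, mul_inv_cancel₀ hr, mul_one,
    ← inv_pow, pow_mul]

lemma reflect_pow (x : ℂ) (m : ℕ) :
    ∑ k ∈ Finset.range m, x ^ (m - k) = ∑ k ∈ Finset.range m, x ^ (k + 1) := by
  rw [← Finset.sum_range_reflect (fun j => x ^ (j + 1)) m]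
  apply Finset.sum_congr rfl
  intro k hk
  rw [Finset.mem_range] at hk
  congr 1
  omega

lemma pw0r {r : ℂ} (hr : r ≠ 0) (a : ℕ) : r⁻¹ * r ^ (2 * a + 1) = (r ^ 2) ^ a := by
  rw [pow_succ, mul_comm (r ^ (2 * a)) r, ← mul_assoc, inv_mul_cancel₀ hr, one_mul, pow_mul]

lemma norm1s {r : ℂ} (hr : r ≠ 0) (a : ℕ) :
    r * (r ^ (2 * a + 1))⁻¹ + ∑ b ∈ Finset.range a, (r - r⁻¹) * (r ^ (2 * b + 1))⁻¹ = 1 := by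
  rw [pw0s hr a]
  rcases eq_or_ne (r ^ 2) 1 with h | h
  · rw [inv_eq_self_of_sq hr h, sub_self]
    simp only [zero_mul, Finset.sum_const_zero, add_zero, inv_pow, h, inv_one, one_pow]
  · have h1 := inv_sq_ne_one h
    have hS := geom_range (r⁻¹ ^ 2) a
    have hsum : ∑ b ∈ Finset.range a, (r - r⁻¹) * (r ^ (2 * b + 1))⁻¹
        = (∑ b ∈ Finset.range a, (r⁻¹ ^ 2) ^ b) * ((r - r⁻¹) * r⁻¹) := by
      rw [Finset.sum_mul]
      apply Finset.sum_congr rfl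
      intro b _
      rw [show (r ^ (2 * b + 1))⁻¹ = (r⁻¹ ^ 2) ^ b * r⁻¹ by rw [← inv_pow, pow_succ, pow_mul]]
      ring
    rw [hsum]
    apply mul_left_cancel₀ h1
    linear_combination ((r - r⁻¹) * r⁻¹) * hS + ((r⁻¹ ^ 2) ^ a - 1) * mul_inv_cancel₀ hr

lemma norm2s {r : ℂ} (hr : r ≠ 0) (a : ℕ) :
    r⁻¹ * r ^ (2 * a + 1) + ∑ b ∈ Finset.range a, (r⁻¹ - r) * r ^ (2 * b + 1) = 1 := by
  rw [pw0r hr a]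
  rcases eq_or_ne (r ^ 2) 1 with h | h
  · rw [inv_eq_self_of_sq hr h, sub_self]
    simp only [zero_mul, Finset.sum_const_zero, add_zero, h, one_pow]
  · have h1 : r ^ 2 - 1 ≠ 0 := sub_ne_zero.mpr h
    have hS := geom_range (r ^ 2) a
    have hsum : ∑ b ∈ Finset.range a, (r⁻¹ - r) * r ^ (2 * b + 1)
        = (∑ b ∈ Finset.range a, (r ^ 2) ^ b) * ((r⁻¹ - r) * r) := by
      rw [Finset.sum_mul]
      apply Finset.sum_congr rfl
      intro b _
      rw [show r ^ (2 * b + 1) = r ^ (2 * b) * r from pow_succ r (2 * b), pow_mul]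
      ring
    rw [hsum]
    apply mul_left_cancel₀ h1
    linear_combination ((r⁻¹ - r) * r) * hS + ((r ^ 2) ^ a - 1) * mul_inv_cancel₀ hr

lemma Q1 {r : ℂ} (hr : r ≠ 0) (m : ℕ) :
    r⁻¹ * (r - r⁻¹) + (r⁻¹ - r) * r * (r⁻¹ ^ 2) ^ (m + 1)
      + ∑ k ∈ Finset.range m, (r⁻¹ - r) * (r - r⁻¹) * (r⁻¹ ^ 2) ^ (k + 1) = 0 := by
  rcases eq_or_ne (r ^ 2) 1 with h | h
  · rw [inv_eq_self_of_sq hr h, sub_self]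
    simp
  · have h1 := inv_sq_ne_one h
    have hS := geom_range (r⁻¹ ^ 2) m
    have hsum : ∑ k ∈ Finset.range m, (r⁻¹ - r) * (r - r⁻¹) * (r⁻¹ ^ 2) ^ (k + 1)
        = (∑ k ∈ Finset.range m, (r⁻¹ ^ 2) ^ k) * ((r⁻¹ - r) * (r - r⁻¹) * r⁻¹ ^ 2) := by
      rw [Finset.sum_mul]
      apply Finset.sum_congr rfl
      intro k _
      rw [pow_succ]
      ring
    rw [hsum, pow_succ]
    apply mul_left_cancel₀ h1
    linear_combination ((r⁻¹ - r) * (r - r⁻¹) * r⁻¹ ^ 2) * hS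
      + ((r - r⁻¹) * r⁻¹ * (1 - (r⁻¹ ^ 2) ^ m * r⁻¹ ^ 2)) * mul_inv_cancel₀ hr

lemma Q2 {r : ℂ} (hr : r ≠ 0) (m : ℕ) :
    r * (r⁻¹ - r) + (r - r⁻¹) * r⁻¹ * (r ^ 2) ^ (m + 1)
      + ∑ k ∈ Finset.range m, (r - r⁻¹) * (r⁻¹ - r) * (r ^ 2) ^ (k + 1) = 0 := by
  rcases eq_or_ne (r ^ 2) 1 with h | h
  · rw [inv_eq_self_of_sq hr h, sub_self]
    simp
  · have h1 : r ^ 2 - 1 ≠ 0 := sub_ne_zero.mpr h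
    have hS := geom_range (r ^ 2) m
    have hsum : ∑ k ∈ Finset.range m, (r - r⁻¹) * (r⁻¹ - r) * (r ^ 2) ^ (k + 1)
        = (∑ k ∈ Finset.range m, (r ^ 2) ^ k) * ((r - r⁻¹) * (r⁻¹ - r) * r ^ 2) := by
      rw [Finset.sum_mul]
      apply Finset.sum_congr rfl
      intro k _
      rw [pow_succ]
      ring
    rw [hsum, pow_succ]
    apply mul_left_cancel₀ h1
    linear_combination ((r - r⁻¹) * (r⁻¹ - r) * r ^ 2) * hS
      + ((r⁻¹ - r) * r * (1 - (r ^ 2) ^ m * r ^ 2)) * mul_inv_cancel₀ hr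

lemma KKa {N : ℕ} (b₀ c₀ : Fin N) (f : Fin N → Fin N → ℂ) :
    ∑ B : Fin N, ∑ C : Fin N, kd c₀ C * (kd B b₀ * f B C) = f b₀ c₀ := by
  simp only [kd, ite_mul, one_mul, zero_mul, Finset.sum_ite_eq, Finset.sum_ite_eq',
    Finset.mem_univ, if_true]

lemma KKb {N : ℕ} (b₀ c₀ : Fin N) (f : Fin N → Fin N → ℂ) :
    ∑ B : Fin N, ∑ C : Fin N, kd C c₀ * (kd b₀ B * f B C) = f b₀ c₀ := by
  simp only [kd, ite_mul, one_mul, zero_mul, Finset.sum_ite_eq, Finset.sum_ite_eq',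
    Finset.mem_univ, if_true]

lemma KKc {N : ℕ} (f : Fin N → Fin N → ℂ) :
    ∑ B : Fin N, ∑ C : Fin N, kd B C * f B C = ∑ B : Fin N, f B B := by
  apply Finset.sum_congr rfl
  intro B _
  simp only [kd, ite_mul, one_mul, zero_mul, Finset.sum_ite_eq, Finset.mem_univ, if_true]

lemma fin_sum_lt {N : ℕ} (A : Fin N) (f : Fin N → ℂ) (g : ℕ → ℂ)
    (hf : ∀ B, f B = if B < A then g B.val else 0) :
    ∑ B : Fin N, f B = ∑ b ∈ Finset.range A.val, g b := by
  rw [Finset.sum_congr rfl (fun B _ => hf B)]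
  rw [show (∑ B : Fin N, if B < A then g B.val else 0)
      = ∑ b ∈ Finset.range N, (if b < A.val then g b else 0) from
    Fin.sum_univ_eq_sum_range (fun b => if b < A.val then g b else 0) N]
  rw [← Finset.sum_filter]
  apply Finset.sum_congr _ (fun x _ => rfl)
  ext b
  simp only [Finset.mem_filter, Finset.mem_range]
  have := A.isLt
  omega

lemma fin_sum_Ioo {N : ℕ} (A E : Fin N) (f : Fin N → ℂ) (g : ℕ → ℂ)
    (hf : ∀ B, f B = if A < B ∧ B < E then g B.val else 0) :
    ∑ B : Fin N, f B = ∑ b ∈ Finset.Ioo A.val E.val, g b := by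
  rw [Finset.sum_congr rfl (fun B _ => hf B)]
  rw [show (∑ B : Fin N, if A < B ∧ B < E then g B.val else 0)
      = ∑ b ∈ Finset.range N, (if A.val < b ∧ b < E.val then g b else 0) from
    Fin.sum_univ_eq_sum_range (fun b => if A.val < b ∧ b < E.val then g b else 0) N]
  rw [← Finset.sum_filter]
  apply Finset.sum_congr _ (fun x _ => rfl)
  ext b
  simp only [Finset.mem_filter, Finset.mem_range, Finset.mem_Ioo]
  have := E.isLt
  omega

lemma kd_eq_zero {α : Type*} [DecidableEq α] {a b : α} (h : a ≠ b) : kd a b = 0 := if_neg h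

lemma id1 (N : ℕ) (r : ℂ) (hr : r ≠ 0)
    (q : Fin N → Fin N → ℂ) (hq0 : ∀ A B, q A B ≠ 0)
    (hqAA : ∀ A, q A A = r) (A D E F : Fin N) :
    (∑ B : Fin N, ∑ C : Fin N,
        dgl r A.val * (dgl r C.val)⁻¹ * RglInv N r q B A D C * Rgl N r q E C B F)
      = kd A F * kd E D := by
  have key : ∀ B C : Fin N,
      dgl r A.val * (dgl r C.val)⁻¹ * RglInv N r q B A D C * Rgl N r q E C B F
      = kd A C * (kd B D *
          (kd E B * kd C F * ((r⁻¹ / (q B A)⁻¹ + (r⁻¹ - 1) * kd B A) * (r / q E C + (r - 1) * kd E C)) * (dgl r A.val * (dgl r C.val)⁻¹)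
          + kd C B * kd E F * ((r⁻¹ / (q B A)⁻¹ + (r⁻¹ - 1) * kd B A) * (r - r⁻¹)) * (if C < E then 1 else 0) * (dgl r A.val * (dgl r C.val)⁻¹)))
        + kd C F * (kd E B *
          (kd B C * kd A D * ((r⁻¹ - r) * (r / q E C + (r - 1) * kd E C)) * (if A < B then 1 else 0) * (dgl r A.val * (dgl r C.val)⁻¹)))
        + kd B C *
          (kd A D * kd E F * kd C B * ((r⁻¹ - r) * (r - r⁻¹)) * (if A < B then 1 else 0) * (if C < E then 1 else 0) * (dgl r A.val * (dgl r C.val)⁻¹)) := by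
    intro B C
    simp only [RglInv, Rgl, inv_inv]
    ring
  rw [Finset.sum_congr rfl (fun B _ => Finset.sum_congr rfl (fun C _ => key B C))]
  simp only [Finset.sum_add_distrib, KKa, KKb, KKc]
  have hdd : ∀ i : ℕ, dgl r i * (dgl r i)⁻¹ = 1 :=
    fun i => mul_inv_cancel₀ (pow_ne_zero _ hr)
  by_cases hAD : A = D
  · subst hAD
    by_cases hEF : E = F
    · subst hEF
      rcases lt_trichotomy A E with hlt | heq | hgt
      · have hne : A ≠ E := ne_of_lt hlt
        have hne' : E ≠ A := ne_of_gt hlt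
        obtain ⟨m, hm⟩ : ∃ m, E.val = A.val + 1 + m :=
          ⟨E.val - A.val - 1, by have := Fin.lt_def.mp hlt; omega⟩
        have hsum : (∑ B : Fin N,
            ((kd A A * kd E E * kd B B * ((r⁻¹ - r) * (r - r⁻¹)) * if A < B then 1 else 0)
              * if B < E then 1 else 0) * (dgl r ↑A * (dgl r ↑B)⁻¹))
            = ∑ k ∈ Finset.range m, (r⁻¹ - r) * (r - r⁻¹) * (r⁻¹ ^ 2) ^ (k + 1) := by
          rw [fin_sum_Ioo A E _
            (fun b => (r⁻¹ - r) * (r - r⁻¹) * (dgl r A.val * (dgl r b)⁻¹))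
            (fun B => by
              by_cases h1 : A < B
              · by_cases h2 : B < E
                · simp only [kd_self, if_pos h1, if_pos h2,
                    if_pos (show A < B ∧ B < E from ⟨h1, h2⟩), one_mul, mul_one]
                  try ring
                · simp [h1, h2]
              · simp [h1])]
          rw [← Finset.Ico_add_one_left_eq_Ioo, ← Nat.succ_eq_add_one, Finset.sum_Ico_eq_sum_range]
          rw [show E.val - Nat.succ A.val = m by omega]
          apply Finset.sum_congr rfl
          intro k hk
          rw [show Nat.succ (A.val) + k = A.val + 1 + k by omega]
          congr 1
          simp only [dgl]
          exact pw_s hr A.val k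
        rw [hsum]
        have hde : dgl r A.val * (dgl r E.val)⁻¹ = (r⁻¹ ^ 2) ^ (m + 1) := by
          rw [hm]
          simp only [dgl]
          exact pw_s hr A.val m
        simp only [kd_eq_zero hne, kd_eq_zero hne', kd_self, if_pos hlt, zero_mul, mul_zero,
          mul_one, one_mul, zero_add, add_zero, hqAA, div_self hr,
          div_self (inv_ne_zero hr), hdd, hde]
        linear_combination Q1 hr m
      · subst heq
        have hz : (∑ B : Fin N,
            ((kd A A * kd A A * kd B B * ((r⁻¹ - r) * (r - r⁻¹)) * if A < B then 1 else 0)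
              * if B < A then 1 else 0) * (dgl r ↑A * (dgl r ↑B)⁻¹)) = 0 := by
          apply Finset.sum_eq_zero
          intro B _
          by_cases h1 : A < B
          · simp [if_neg (asymm h1)]
          · simp [h1]
        rw [hz]
        simp only [kd_self, if_neg (lt_irrefl A), mul_zero, zero_mul, mul_one, one_mul,
          add_zero, hqAA, div_self hr, div_self (inv_ne_zero hr), hdd]
        linear_combination mul_inv_cancel₀ hr
      · have hne : A ≠ E := ne_of_gt hgt
        have hne' : E ≠ A := ne_of_lt hgt
        have hnlt : ¬ A < E := asymm hgt
        have hz : (∑ B : Fin N,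
            ((kd A A * kd E E * kd B B * ((r⁻¹ - r) * (r - r⁻¹)) * if A < B then 1 else 0)
              * if B < E then 1 else 0) * (dgl r ↑A * (dgl r ↑B)⁻¹)) = 0 := by
          apply Finset.sum_eq_zero
          intro B _
          by_cases h1 : A < B
          · by_cases h2 : B < E
            · exact absurd (h1.trans h2) hnlt
            · simp [h2]
          · simp [h1]
        rw [hz]
        simp [kd_eq_zero hne, kd_eq_zero hne', hnlt]
    · have hz : (∑ B : Fin N,
          ((kd A A * kd E F * kd B B * ((r⁻¹ - r) * (r - r⁻¹)) * if A < B then 1 else 0)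
            * if B < E then 1 else 0) * (dgl r ↑A * (dgl r ↑B)⁻¹)) = 0 := by
        apply Finset.sum_eq_zero
        intro B _
        simp [kd_eq_zero hEF]
      rw [hz]
      simp only [kd_eq_zero hEF, zero_mul, mul_zero, add_zero]
      by_cases hEA : E = A
      · subst hEA
        simp only [kd_self, hqAA, div_self hr, div_self (inv_ne_zero hr), hdd, mul_one, one_mul]
        ring_nf
        linear_combination kd E F * mul_inv_cancel₀ hr
      · simp [kd_eq_zero hEA]
  · have hz : (∑ B : Fin N,
        ((kd A D * kd E F * kd B B * ((r⁻¹ - r) * (r - r⁻¹)) * if A < B then 1 else 0)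
          * if B < E then 1 else 0) * (dgl r ↑A * (dgl r ↑B)⁻¹)) = 0 := by
      apply Finset.sum_eq_zero
      intro B _
      simp [kd_eq_zero hAD]
    rw [hz]
    simp only [kd_eq_zero hAD, zero_mul, mul_zero, add_zero]
    by_cases hED : E = D
    · subst hED
      by_cases hAF : A = F
      · subst hAF
        simp only [kd_self, kd_eq_zero (Ne.symm hAD), hdd, mul_one, one_mul, mul_zero,
          add_zero, zero_mul]
        field_simp
        exact div_self (hq0 E A)
      · simp [kd_eq_zero hAF]
    · simp [kd_eq_zero hED]

lemma id2 (N : ℕ) (r : ℂ) (hr : r ≠ 0)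
    (q : Fin N → Fin N → ℂ) (hq0 : ∀ A B, q A B ≠ 0)
    (hqAA : ∀ A, q A A = r) (A D E F : Fin N) :
    (∑ B : Fin N, ∑ C : Fin N,
        dgl r A.val * (dgl r C.val)⁻¹ * Rgl N r q A B C D * RglInv N r q C E F B)
      = kd A F * kd E D := by
  have key : ∀ B C : Fin N,
      dgl r A.val * (dgl r C.val)⁻¹ * Rgl N r q A B C D * RglInv N r q C E F B
      = kd A C * (kd B D *
          (kd C F * kd E B * ((r / q A B + (r - 1) * kd A B) * (r⁻¹ / (q C E)⁻¹ + (r⁻¹ - 1) * kd C E)) * (dgl r A.val * (dgl r C.val)⁻¹)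
          + kd C B * kd E F * ((r / q A B + (r - 1) * kd A B) * (r⁻¹ - r)) * (if E < C then 1 else 0) * (dgl r A.val * (dgl r C.val)⁻¹)))
        + kd C F * (kd E B *
          (kd B C * kd A D * ((r - r⁻¹) * (r⁻¹ / (q C E)⁻¹ + (r⁻¹ - 1) * kd C E)) * (if B < A then 1 else 0) * (dgl r A.val * (dgl r C.val)⁻¹)))
        + kd B C *
          (kd A D * kd E F * kd C B * ((r - r⁻¹) * (r⁻¹ - r)) * (if B < A then 1 else 0) * (if E < C then 1 else 0) * (dgl r A.val * (dgl r C.val)⁻¹)) := by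
    intro B C
    simp only [RglInv, Rgl, inv_inv]
    ring
  rw [Finset.sum_congr rfl (fun B _ => Finset.sum_congr rfl (fun C _ => key B C))]
  simp only [Finset.sum_add_distrib, KKa, KKb, KKc]
  have hdd : ∀ i : ℕ, dgl r i * (dgl r i)⁻¹ = 1 :=
    fun i => mul_inv_cancel₀ (pow_ne_zero _ hr)
  by_cases hAD : A = D
  · subst hAD
    by_cases hEF : E = F
    · subst hEF
      rcases lt_trichotomy A E with hlt | heq | hgt
      · have hne : A ≠ E := ne_of_lt hlt
        have hne' : E ≠ A := ne_of_gt hlt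
        have hnlt : ¬ E < A := asymm hlt
        have hz : (∑ B : Fin N,
            ((kd A A * kd E E * kd B B * ((r - r⁻¹) * (r⁻¹ - r)) * if B < A then 1 else 0)
              * if E < B then 1 else 0) * (dgl r ↑A * (dgl r ↑B)⁻¹)) = 0 := by
          apply Finset.sum_eq_zero
          intro B _
          by_cases h1 : E < B
          · by_cases h2 : B < A
            · exact absurd (h1.trans h2) hnlt
            · simp [h2]
          · simp [h1]
        rw [hz]
        simp [kd_eq_zero hne, kd_eq_zero hne', hnlt]
      · subst heq
        have hz : (∑ B : Fin N,
            ((kd A A * kd A A * kd B B * ((r - r⁻¹) * (r⁻¹ - r)) * if B < A then 1 else 0)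
              * if A < B then 1 else 0) * (dgl r ↑A * (dgl r ↑B)⁻¹)) = 0 := by
          apply Finset.sum_eq_zero
          intro B _
          by_cases h1 : A < B
          · simp [if_neg (asymm h1)]
          · simp [h1]
        rw [hz]
        simp only [kd_self, if_neg (lt_irrefl A), mul_zero, zero_mul, mul_one, one_mul,
          add_zero, hqAA, div_self hr, div_self (inv_ne_zero hr), hdd]
        linear_combination mul_inv_cancel₀ hr
      · have hne : A ≠ E := ne_of_gt hgt
        have hne' : E ≠ A := ne_of_lt hgt
        obtain ⟨m, hm⟩ : ∃ m, A.val = E.val + 1 + m :=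
          ⟨A.val - E.val - 1, by have := Fin.lt_def.mp hgt; omega⟩
        have hsum : (∑ B : Fin N,
            ((kd A A * kd E E * kd B B * ((r - r⁻¹) * (r⁻¹ - r)) * if B < A then 1 else 0)
              * if E < B then 1 else 0) * (dgl r ↑A * (dgl r ↑B)⁻¹))
            = ∑ k ∈ Finset.range m, (r - r⁻¹) * (r⁻¹ - r) * (r ^ 2) ^ (k + 1) := by
          rw [fin_sum_Ioo E A _
            (fun b => (r - r⁻¹) * (r⁻¹ - r) * (dgl r A.val * (dgl r b)⁻¹))
            (fun B => by
              by_cases h1 : E < B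
              · by_cases h2 : B < A
                · simp only [kd_self, if_pos h1, if_pos h2,
                    if_pos (show E < B ∧ B < A from ⟨h1, h2⟩), one_mul, mul_one]
                  try ring
                · simp [h1, h2]
              · simp [h1])]
          rw [← Finset.Ico_add_one_left_eq_Ioo, ← Nat.succ_eq_add_one, Finset.sum_Ico_eq_sum_range]
          rw [show A.val - Nat.succ E.val = m by omega]
          rw [Finset.sum_congr rfl (fun k hk => show
              (r - r⁻¹) * (r⁻¹ - r) * (dgl r A.val * (dgl r (Nat.succ E.val + k))⁻¹)
              = (r - r⁻¹) * (r⁻¹ - r) * ((r ^ 2) ^ (m - k)) from by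
            congr 1
            simp only [dgl]
            rw [hm, show E.val + 1 + m = E.val + m + 1 by omega,
              show Nat.succ E.val + k = E.val + 1 + k by omega]
            exact pw_r' hr E.val m k (Finset.mem_range.mp hk).le)]
          rw [← Finset.mul_sum, reflect_pow, Finset.mul_sum]
        rw [hsum]
        have hde : dgl r A.val * (dgl r E.val)⁻¹ = (r ^ 2) ^ (m + 1) := by
          simp only [dgl]
          rw [hm]
          exact pw_r hr E.val m
        simp only [kd_eq_zero hne, kd_eq_zero hne', kd_self, if_pos hgt, zero_mul, mul_zero,
          mul_one, one_mul, zero_add, add_zero, hqAA, div_self hr,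
          div_self (inv_ne_zero hr), hdd, hde]
        linear_combination Q2 hr m
    · have hz : (∑ B : Fin N,
          ((kd A A * kd E F * kd B B * ((r - r⁻¹) * (r⁻¹ - r)) * if B < A then 1 else 0)
            * if E < B then 1 else 0) * (dgl r ↑A * (dgl r ↑B)⁻¹)) = 0 := by
        apply Finset.sum_eq_zero
        intro B _
        simp [kd_eq_zero hEF]
      rw [hz]
      simp only [kd_eq_zero hEF, zero_mul, mul_zero, add_zero]
      by_cases hEA : E = A
      · subst hEA
        simp only [kd_self, hqAA, div_self hr, div_self (inv_ne_zero hr), hdd, mul_one, one_mul]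
        ring_nf
        linear_combination kd E F * mul_inv_cancel₀ hr
      · simp [kd_eq_zero hEA]
  · have hz : (∑ B : Fin N,
        ((kd A D * kd E F * kd B B * ((r - r⁻¹) * (r⁻¹ - r)) * if B < A then 1 else 0)
          * if E < B then 1 else 0) * (dgl r ↑A * (dgl r ↑B)⁻¹)) = 0 := by
      apply Finset.sum_eq_zero
      intro B _
      simp [kd_eq_zero hAD]
    rw [hz]
    simp only [kd_eq_zero hAD, zero_mul, mul_zero, add_zero]
    by_cases hED : E = D
    · subst hED
      by_cases hAF : A = F
      · subst hAF
        simp only [kd_self, kd_eq_zero hAD, kd_eq_zero (Ne.symm hAD), hdd, mul_one, one_mul,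
          mul_zero, add_zero, zero_mul]
        field_simp
        exact div_self (hq0 A E)
      · simp [kd_eq_zero hAF]
    · simp [kd_eq_zero hED]

lemma id3 (N : ℕ) (r : ℂ) (hr : r ≠ 0)
    (q : Fin N → Fin N → ℂ) (hq0 : ∀ A B, q A B ≠ 0)
    (hqAA : ∀ A, q A A = r) (A D E F : Fin N) :
    (∑ B : Fin N, ∑ C : Fin N,
        dgl r B.val * (dgl r D.val)⁻¹ * RglInv N r q A B C D * Rgl N r q C E F B)
      = kd A F * kd E D := by
  have key : ∀ B C : Fin N,
      dgl r B.val * (dgl r D.val)⁻¹ * RglInv N r q A B C D * Rgl N r q C E F B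
      = kd A C * (kd B D *
          (kd C F * kd E B * ((r⁻¹ / (q A B)⁻¹ + (r⁻¹ - 1) * kd A B) * (r / q C E + (r - 1) * kd C E)) * (dgl r B.val * (dgl r D.val)⁻¹)
          + kd C B * kd E F * ((r⁻¹ / (q A B)⁻¹ + (r⁻¹ - 1) * kd A B) * (r - r⁻¹)) * (if E < C then 1 else 0) * (dgl r B.val * (dgl r D.val)⁻¹)))
        + kd C F * (kd E B *
          (kd B C * kd A D * ((r⁻¹ - r) * (r / q C E + (r - 1) * kd C E)) * (if B < A then 1 else 0) * (dgl r B.val * (dgl r D.val)⁻¹)))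
        + kd B C *
          (kd A D * kd E F * kd C B * ((r⁻¹ - r) * (r - r⁻¹)) * (if B < A then 1 else 0) * (if E < C then 1 else 0) * (dgl r B.val * (dgl r D.val)⁻¹)) := by
    intro B C
    simp only [RglInv, Rgl, inv_inv]
    ring
  rw [Finset.sum_congr rfl (fun B _ => Finset.sum_congr rfl (fun C _ => key B C))]
  simp only [Finset.sum_add_distrib, KKa, KKb, KKc]
  have hdd : ∀ i : ℕ, dgl r i * (dgl r i)⁻¹ = 1 :=
    fun i => mul_inv_cancel₀ (pow_ne_zero _ hr)
  by_cases hAD : A = D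
  · subst hAD
    by_cases hEF : E = F
    · subst hEF
      rcases lt_trichotomy A E with hlt | heq | hgt
      · have hne : A ≠ E := ne_of_lt hlt
        have hne' : E ≠ A := ne_of_gt hlt
        have hnlt : ¬ E < A := asymm hlt
        have hz : (∑ B : Fin N,
            ((kd A A * kd E E * kd B B * ((r⁻¹ - r) * (r - r⁻¹)) * if B < A then 1 else 0)
              * if E < B then 1 else 0) * (dgl r ↑B * (dgl r ↑A)⁻¹)) = 0 := by
          apply Finset.sum_eq_zero
          intro B _
          by_cases h1 : E < B
          · by_cases h2 : B < A
            · exact absurd (h1.trans h2) hnlt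
            · simp [h2]
          · simp [h1]
        rw [hz]
        simp [kd_eq_zero hne, kd_eq_zero hne', hnlt]
      · subst heq
        have hz : (∑ B : Fin N,
            ((kd A A * kd A A * kd B B * ((r⁻¹ - r) * (r - r⁻¹)) * if B < A then 1 else 0)
              * if A < B then 1 else 0) * (dgl r ↑B * (dgl r ↑A)⁻¹)) = 0 := by
          apply Finset.sum_eq_zero
          intro B _
          by_cases h1 : A < B
          · simp [if_neg (asymm h1)]
          · simp [h1]
        rw [hz]
        simp only [kd_self, if_neg (lt_irrefl A), mul_zero, zero_mul, mul_one, one_mul,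
          add_zero, hqAA, div_self hr, div_self (inv_ne_zero hr), hdd]
        linear_combination mul_inv_cancel₀ hr
      · have hne : A ≠ E := ne_of_gt hgt
        have hne' : E ≠ A := ne_of_lt hgt
        obtain ⟨m, hm⟩ : ∃ m, A.val = E.val + 1 + m :=
          ⟨A.val - E.val - 1, by have := Fin.lt_def.mp hgt; omega⟩
        have hsum : (∑ B : Fin N,
            ((kd A A * kd E E * kd B B * ((r⁻¹ - r) * (r - r⁻¹)) * if B < A then 1 else 0)
              * if E < B then 1 else 0) * (dgl r ↑B * (dgl r ↑A)⁻¹))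
            = ∑ k ∈ Finset.range m, (r⁻¹ - r) * (r - r⁻¹) * (r⁻¹ ^ 2) ^ (k + 1) := by
          rw [fin_sum_Ioo E A _
            (fun b => (r⁻¹ - r) * (r - r⁻¹) * (dgl r b * (dgl r A.val)⁻¹))
            (fun B => by
              by_cases h1 : E < B
              · by_cases h2 : B < A
                · simp only [kd_self, if_pos h1, if_pos h2,
                    if_pos (show E < B ∧ B < A from ⟨h1, h2⟩), one_mul, mul_one]
                  try ring
                · simp [h1, h2]
              · simp [h1])]
          rw [← Finset.Ico_add_one_left_eq_Ioo, ← Nat.succ_eq_add_one, Finset.sum_Ico_eq_sum_range]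
          rw [show A.val - Nat.succ E.val = m by omega]
          rw [Finset.sum_congr rfl (fun k hk => show
              (r⁻¹ - r) * (r - r⁻¹) * (dgl r (Nat.succ E.val + k) * (dgl r A.val)⁻¹)
              = (r⁻¹ - r) * (r - r⁻¹) * ((r⁻¹ ^ 2) ^ (m - k)) from by
            congr 1
            simp only [dgl]
            rw [hm, show E.val + 1 + m = E.val + m + 1 by omega,
              show Nat.succ E.val + k = E.val + 1 + k by omega]
            exact pw_s' hr E.val m k (Finset.mem_range.mp hk).le)]
          rw [← Finset.mul_sum, reflect_pow, Finset.mul_sum]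
        rw [hsum]
        have hde : dgl r E.val * (dgl r A.val)⁻¹ = (r⁻¹ ^ 2) ^ (m + 1) := by
          simp only [dgl]
          rw [hm]
          exact pw_s hr E.val m
        simp only [kd_eq_zero hne, kd_eq_zero hne', kd_self, if_pos hgt, zero_mul, mul_zero,
          mul_one, one_mul, zero_add, add_zero, hqAA, div_self hr,
          div_self (inv_ne_zero hr), hdd, hde]
        linear_combination Q1 hr m
    · have hz : (∑ B : Fin N,
          ((kd A A * kd E F * kd B B * ((r⁻¹ - r) * (r - r⁻¹)) * if B < A then 1 else 0)
            * if E < B then 1 else 0) * (dgl r ↑B * (dgl r ↑A)⁻¹)) = 0 := by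
        apply Finset.sum_eq_zero
        intro B _
        simp [kd_eq_zero hEF]
      rw [hz]
      simp only [kd_eq_zero hEF, zero_mul, mul_zero, add_zero]
      by_cases hEA : E = A
      · subst hEA
        simp only [kd_self, hqAA, div_self hr, div_self (inv_ne_zero hr), hdd, mul_one, one_mul]
        ring_nf
        linear_combination kd E F * mul_inv_cancel₀ hr
      · simp [kd_eq_zero hEA]
  · have hz : (∑ B : Fin N,
        ((kd A D * kd E F * kd B B * ((r⁻¹ - r) * (r - r⁻¹)) * if B < A then 1 else 0)
          * if E < B then 1 else 0) * (dgl r ↑B * (dgl r ↑D)⁻¹)) = 0 := by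
      apply Finset.sum_eq_zero
      intro B _
      simp [kd_eq_zero hAD]
    rw [hz]
    simp only [kd_eq_zero hAD, zero_mul, mul_zero, add_zero]
    by_cases hED : E = D
    · subst hED
      by_cases hAF : A = F
      · subst hAF
        simp only [kd_self, kd_eq_zero hAD, kd_eq_zero (Ne.symm hAD), hdd, mul_one, one_mul,
          mul_zero, add_zero, zero_mul]
        field_simp
        exact div_self (hq0 A E)
      · simp [kd_eq_zero hAF]
    · simp [kd_eq_zero hED]

lemma id4 (N : ℕ) (r : ℂ) (hr : r ≠ 0)
    (q : Fin N → Fin N → ℂ) (hq0 : ∀ A B, q A B ≠ 0)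
    (hqAA : ∀ A, q A A = r) (A D E F : Fin N) :
    (∑ B : Fin N, ∑ C : Fin N,
        dgl r B.val * (dgl r D.val)⁻¹ * Rgl N r q B A D C * RglInv N r q E C B F)
      = kd A F * kd E D := by
  have key : ∀ B C : Fin N,
      dgl r B.val * (dgl r D.val)⁻¹ * Rgl N r q B A D C * RglInv N r q E C B F
      = kd A C * (kd B D *
          (kd E B * kd C F * ((r / q B A + (r - 1) * kd B A) * (r⁻¹ / (q E C)⁻¹ + (r⁻¹ - 1) * kd E C)) * (dgl r B.val * (dgl r D.val)⁻¹)
          + kd E F * kd C B * ((r / q B A + (r - 1) * kd B A) * (r⁻¹ - r)) * (if C < E then 1 else 0) * (dgl r B.val * (dgl r D.val)⁻¹)))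
        + kd C F * (kd E B *
          (kd B C * kd A D * ((r - r⁻¹) * (r⁻¹ / (q E C)⁻¹ + (r⁻¹ - 1) * kd E C)) * (if A < B then 1 else 0) * (dgl r B.val * (dgl r D.val)⁻¹)))
        + kd B C *
          (kd A D * kd E F * kd C B * ((r - r⁻¹) * (r⁻¹ - r)) * (if A < B then 1 else 0) * (if C < E then 1 else 0) * (dgl r B.val * (dgl r D.val)⁻¹)) := by
    intro B C
    simp only [RglInv, Rgl, inv_inv]
    ring
  rw [Finset.sum_congr rfl (fun B _ => Finset.sum_congr rfl (fun C _ => key B C))]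
  simp only [Finset.sum_add_distrib, KKa, KKb, KKc]
  have hdd : ∀ i : ℕ, dgl r i * (dgl r i)⁻¹ = 1 :=
    fun i => mul_inv_cancel₀ (pow_ne_zero _ hr)
  by_cases hAD : A = D
  · subst hAD
    by_cases hEF : E = F
    · subst hEF
      rcases lt_trichotomy A E with hlt | heq | hgt
      · have hne : A ≠ E := ne_of_lt hlt
        have hne' : E ≠ A := ne_of_gt hlt
        obtain ⟨m, hm⟩ : ∃ m, E.val = A.val + 1 + m :=
          ⟨E.val - A.val - 1, by have := Fin.lt_def.mp hlt; omega⟩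
        have hsum : (∑ B : Fin N,
            ((kd A A * kd E E * kd B B * ((r - r⁻¹) * (r⁻¹ - r)) * if A < B then 1 else 0)
              * if B < E then 1 else 0) * (dgl r ↑B * (dgl r ↑A)⁻¹))
            = ∑ k ∈ Finset.range m, (r - r⁻¹) * (r⁻¹ - r) * (r ^ 2) ^ (k + 1) := by
          rw [fin_sum_Ioo A E _
            (fun b => (r - r⁻¹) * (r⁻¹ - r) * (dgl r b * (dgl r A.val)⁻¹))
            (fun B => by
              by_cases h1 : A < B
              · by_cases h2 : B < E
                · simp only [kd_self, if_pos h1, if_pos h2,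
                    if_pos (show A < B ∧ B < E from ⟨h1, h2⟩), one_mul, mul_one]
                  try ring
                · simp [h1, h2]
              · simp [h1])]
          rw [← Finset.Ico_add_one_left_eq_Ioo, ← Nat.succ_eq_add_one, Finset.sum_Ico_eq_sum_range]
          rw [show E.val - Nat.succ A.val = m by omega]
          apply Finset.sum_congr rfl
          intro k hk
          rw [show Nat.succ (A.val) + k = A.val + 1 + k by omega]
          congr 1
          simp only [dgl]
          exact pw_r hr A.val k
        rw [hsum]
        have hde : dgl r E.val * (dgl r A.val)⁻¹ = (r ^ 2) ^ (m + 1) := by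
          simp only [dgl]
          rw [hm]
          exact pw_r hr A.val m
        simp only [kd_eq_zero hne, kd_eq_zero hne', kd_self, if_pos hlt, zero_mul, mul_zero,
          mul_one, one_mul, zero_add, add_zero, hqAA, div_self hr,
          div_self (inv_ne_zero hr), hdd, hde]
        linear_combination Q2 hr m
      · subst heq
        have hz : (∑ B : Fin N,
            ((kd A A * kd A A * kd B B * ((r - r⁻¹) * (r⁻¹ - r)) * if A < B then 1 else 0)
              * if B < A then 1 else 0) * (dgl r ↑B * (dgl r ↑A)⁻¹)) = 0 := by
          apply Finset.sum_eq_zero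
          intro B _
          by_cases h1 : A < B
          · simp [if_neg (asymm h1)]
          · simp [h1]
        rw [hz]
        simp only [kd_self, if_neg (lt_irrefl A), mul_zero, zero_mul, mul_one, one_mul,
          add_zero, hqAA, div_self hr, div_self (inv_ne_zero hr), hdd]
        linear_combination mul_inv_cancel₀ hr
      · have hne : A ≠ E := ne_of_gt hgt
        have hne' : E ≠ A := ne_of_lt hgt
        have hnlt : ¬ A < E := asymm hgt
        have hz : (∑ B : Fin N,
            ((kd A A * kd E E * kd B B * ((r - r⁻¹) * (r⁻¹ - r)) * if A < B then 1 else 0)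
              * if B < E then 1 else 0) * (dgl r ↑B * (dgl r ↑A)⁻¹)) = 0 := by
          apply Finset.sum_eq_zero
          intro B _
          by_cases h1 : A < B
          · by_cases h2 : B < E
            · exact absurd (h1.trans h2) hnlt
            · simp [h2]
          · simp [h1]
        rw [hz]
        simp [kd_eq_zero hne, kd_eq_zero hne', hnlt]
    · have hz : (∑ B : Fin N,
          ((kd A A * kd E F * kd B B * ((r - r⁻¹) * (r⁻¹ - r)) * if A < B then 1 else 0)
            * if B < E then 1 else 0) * (dgl r ↑B * (dgl r ↑A)⁻¹)) = 0 := by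
        apply Finset.sum_eq_zero
        intro B _
        simp [kd_eq_zero hEF]
      rw [hz]
      simp only [kd_eq_zero hEF, zero_mul, mul_zero, add_zero]
      by_cases hEA : E = A
      · subst hEA
        simp only [kd_self, hqAA, div_self hr, div_self (inv_ne_zero hr), hdd, mul_one, one_mul]
        ring_nf
        linear_combination kd E F * mul_inv_cancel₀ hr
      · simp [kd_eq_zero hEA]
  · have hz : (∑ B : Fin N,
        ((kd A D * kd E F * kd B B * ((r - r⁻¹) * (r⁻¹ - r)) * if A < B then 1 else 0)
          * if B < E then 1 else 0) * (dgl r ↑B * (dgl r ↑D)⁻¹)) = 0 := by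
      apply Finset.sum_eq_zero
      intro B _
      simp [kd_eq_zero hAD]
    rw [hz]
    simp only [kd_eq_zero hAD, zero_mul, mul_zero, add_zero]
    by_cases hED : E = D
    · subst hED
      by_cases hAF : A = F
      · subst hAF
        simp only [kd_self, kd_eq_zero hAD, kd_eq_zero (Ne.symm hAD), hdd, mul_one, one_mul,
          mul_zero, add_zero, zero_mul]
        field_simp
        exact div_self (hq0 E A)
      · simp [kd_eq_zero hAF]
    · simp [kd_eq_zero hED]

lemma id5 (N : ℕ) (r : ℂ) (hr : r ≠ 0)
    (q : Fin N → Fin N → ℂ) (hq0 : ∀ A B, q A B ≠ 0)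
    (hqAA : ∀ A, q A A = r) (A B : Fin N) :
    (∑ C : Fin N, Rgl N r q A C C B * (dgl r C.val)⁻¹) = kd A B := by
  simp only [Rgl, dgl, kd, ite_mul, mul_ite, mul_zero, zero_mul, one_mul, mul_one,
    add_mul, Finset.sum_add_distrib, Finset.sum_ite_eq, Finset.sum_ite_eq',
    Finset.mem_univ, if_true]
  rcases eq_or_ne A B with rfl | h
  · simp only [eq_self_iff_true, if_true]
    rw [hqAA, fin_sum_lt A _ (fun b => (r - r⁻¹) * (r ^ (2 * b + 1))⁻¹) (fun C => rfl)]
    linear_combination norm1s hr A.val + (r ^ (2 * A.val + 1))⁻¹ * div_self hr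
  · simp [h]

lemma id6 (N : ℕ) (r : ℂ) (hr : r ≠ 0)
    (q : Fin N → Fin N → ℂ) (hq0 : ∀ A B, q A B ≠ 0)
    (hqAA : ∀ A, q A A = r) (A B : Fin N) :
    (∑ C : Fin N, RglInv N r q A C C B * dgl r C.val) = kd A B := by
  simp only [RglInv, Rgl, inv_inv, dgl, kd, ite_mul, mul_ite, mul_zero, zero_mul, one_mul,
    mul_one, add_mul, Finset.sum_add_distrib, Finset.sum_ite_eq, Finset.sum_ite_eq',
    Finset.mem_univ, if_true]
  rcases eq_or_ne A B with rfl | h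
  · simp only [eq_self_iff_true, if_true]
    rw [hqAA, fin_sum_lt A _ (fun b => (r⁻¹ - r) * r ^ (2 * b + 1)) (fun C => rfl)]
    linear_combination norm2s hr A.val + r ^ (2 * A.val + 1) * div_self (inv_ne_zero hr)
  · simp [h]

/-- the diagonal matrix `D` provides a 'second inverse' for the
multiparametric GL R-matrix (four identities), together with the normalization
conditions `Σ_C R^{AC}_{CB} (d^C)⁻¹ = δ^A_B = Σ_C (R⁻¹)^{AC}_{CB} d^C`. -/
theorem statement10 (N : ℕ) (hN : 1 ≤ N) (r : ℂ) (hr : r ≠ 0)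
    (q : Fin N → Fin N → ℂ) (hq0 : ∀ A B, q A B ≠ 0)
    (hqAA : ∀ A, q A A = r) (hqBA : ∀ A B, q B A * q A B = r ^ 2) :
    (∀ A D E F : Fin N,
      (∑ B : Fin N, ∑ C : Fin N,
          dgl r A.val * (dgl r C.val)⁻¹ * RglInv N r q B A D C * Rgl N r q E C B F)
        = kd A F * kd E D) ∧
    (∀ A D E F : Fin N,
      (∑ B : Fin N, ∑ C : Fin N,
          dgl r A.val * (dgl r C.val)⁻¹ * Rgl N r q A B C D * RglInv N r q C E F B)
        = kd A F * kd E D) ∧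
    (∀ A D E F : Fin N,
      (∑ B : Fin N, ∑ C : Fin N,
          dgl r B.val * (dgl r D.val)⁻¹ * RglInv N r q A B C D * Rgl N r q C E F B)
        = kd A F * kd E D) ∧
    (∀ A D E F : Fin N,
      (∑ B : Fin N, ∑ C : Fin N,
          dgl r B.val * (dgl r D.val)⁻¹ * Rgl N r q B A D C * RglInv N r q E C B F)
        = kd A F * kd E D) ∧
    (∀ A B : Fin N, (∑ C : Fin N, Rgl N r q A C C B * (dgl r C.val)⁻¹) = kd A B) ∧
    (∀ A B : Fin N, (∑ C : Fin N, RglInv N r q A C C B * dgl r C.val) = kd A B) := by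
  exact ⟨fun A D E F => id1 N r hr q hq0 hqAA A D E F,
    fun A D E F => id2 N r hr q hq0 hqAA A D E F,
    fun A D E F => id3 N r hr q hq0 hqAA A D E F,
    fun A D E F => id4 N r hr q hq0 hqAA A D E F,
    fun A B => id5 N r hr q hq0 hqAA A B,
    fun A B => id6 N r hr q hq0 hqAA A B⟩
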